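/- arXiv:1210.1942 — 2 statements merged into one kernel-verified Lean document; each statement's English description precedes it below -/
import Mathlib

section
/- For 0 < α < 1, ∫_0^1 du/√((1-u²)(1-αu²)) = (π/2) Σ_{n≥0} C(2n,n)² (α/16)^n, where C(2n,n) is the central binomial coefficient. -/
open scoped Real
open intervalIntegral MeasureTheory Set Filter

noncomputable def cb (n : ℕ) : ℝ := (Nat.centralBinom n : ℝ) / 4 ^ n

lemma cb_nonneg (n : ℕ) : 0 ≤ cb n := by unfold cb; positivity

lemma cb_le_one (n : ℕ) : cb n ≤ 1 := by
  rw [cb, div_le_one (by positivity)]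
  have h : Nat.centralBinom n ≤ 4 ^ n := by
    have h1 : Nat.centralBinom n ≤ ∑ i ∈ Finset.range (2 * n + 1), (2 * n).choose i :=
      Finset.single_le_sum (f := fun i => (2 * n).choose i) (fun i _ => Nat.zero_le _)
        (by simp [Finset.mem_range]; omega)
    rw [Nat.sum_range_choose] at h1
    calc Nat.centralBinom n ≤ 2 ^ (2 * n) := h1
      _ = 4 ^ n := by rw [pow_mul]; norm_num
  exact_mod_cast h

lemma cb_succ (k : ℕ) : cb (k + 1) = (2 * k + 1) / (2 * k + 2) * cb k := by
  have h := Nat.succ_mul_centralBinom_succ k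
  have h' : ((k : ℝ) + 1) * (Nat.centralBinom (k + 1) : ℝ)
      = 2 * (2 * k + 1) * (Nat.centralBinom k : ℝ) := by exact_mod_cast h
  have hk : (k : ℝ) + 1 ≠ 0 := by positivity
  rw [cb, cb, pow_succ]
  field_simp
  linear_combination 2 * h'

lemma wallis (n : ℕ) :
    ∫ θ in (0:ℝ)..(π/2), Real.sin θ ^ (2 * n) = π / 2 * cb n := by
  induction n with
  | zero => simp [cb]
  | succ k ih =>
    have h := integral_sin_pow (a := 0) (b := π/2) (2 * k)
    rw [show 2 * (k + 1) = 2 * k + 2 from by ring, h, ih,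
      Real.sin_zero, Real.cos_pi_div_two, cb_succ]
    push_cast
    ring
lemma one_sub_mul_sin_sq_pos {t : ℝ} (ht0 : 0 ≤ t) (ht1 : t < 1) (θ : ℝ) :
    0 < 1 - t * Real.sin θ ^ 2 := by
  nlinarith [Real.sin_sq_le_one θ, sq_nonneg (Real.sin θ)]

lemma integral_rat {t : ℝ} (ht0 : 0 ≤ t) (ht1 : t < 1) :
    ∫ θ in (0:ℝ)..(π/2), (1 - t * Real.sin θ ^ 2)⁻¹ = π / (2 * Real.sqrt (1 - t)) := by
  set c := Real.sqrt (1 - t) with hcdef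
  have hc0 : 0 < c := Real.sqrt_pos.mpr (by linarith)
  have hc2 : c ^ 2 = 1 - t := Real.sq_sqrt (by linarith)
  set h : ℝ → ℝ := fun θ => (1 - t * Real.sin θ ^ 2)⁻¹ with hh
  have hpos := one_sub_mul_sin_sq_pos ht0 ht1
  have hcont : Continuous h :=
    ((by continuity : Continuous fun θ => 1 - t * Real.sin θ ^ 2)).inv₀ fun θ => (hpos θ).ne'
  set F : ℝ → ℝ := fun b => Real.arctan (c * Real.tan b) / c with hF
  set G : ℝ → ℝ := fun b => ∫ θ in (0:ℝ)..b, h θ with hG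
  have hGcont : Continuous G :=
    intervalIntegral.continuous_primitive (fun a b => hcont.intervalIntegrable a b) 0
  have hderiv : ∀ x ∈ Set.Ico (0:ℝ) (π/2), HasDerivAt F (h x) x := by
    intro x hx
    have hcos : 0 < Real.cos x :=
      Real.cos_pos_of_mem_Ioo ⟨by linarith [hx.1, Real.pi_pos], hx.2⟩
    have h1 : HasDerivAt (fun y => c * Real.tan y) (c * (1 / Real.cos x ^ 2)) x :=
      (Real.hasDerivAt_tan hcos.ne').const_mul c
    have h2 : HasDerivAt Real.arctan (1 / (1 + (c * Real.tan x) ^ 2)) (c * Real.tan x) :=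
      Real.hasDerivAt_arctan _
    have h3 := (h2.comp x h1).div_const c
    convert h3 using 1
    · rfl
    · rfl
    · rfl
    rw [hh]
    have hs := Real.sin_sq_add_cos_sq x
    rw [Real.tan_eq_sin_div_cos]
    field_simp [(hpos x).ne']
    linear_combination Real.sin x ^ 2 * hc2 + hs
  have hGF : ∀ b ∈ Set.Ico (0:ℝ) (π/2), G b = F b := by
    intro b hb
    have : G b = F b - F 0 := by
      apply intervalIntegral.integral_eq_sub_of_hasDerivAt
      · intro x hx
        apply hderiv
        rw [Set.uIcc_of_le hb.1] at hx
        exact ⟨hx.1, lt_of_le_of_lt hx.2 hb.2⟩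
      · exact hcont.intervalIntegrable 0 b
    rw [this]
    simp [hF]
  have hFlim : Tendsto F (nhdsWithin (π/2) (Set.Iio (π/2))) (nhds (π / 2 / c)) := by
    have h1 : Tendsto (fun b => c * Real.tan b) (nhdsWithin (π/2) (Set.Iio (π/2))) atTop :=
      (Real.tendsto_tan_pi_div_two).const_mul_atTop hc0
    have h2 : Tendsto (fun b => Real.arctan (c * Real.tan b))
        (nhdsWithin (π/2) (Set.Iio (π/2))) (nhds (π/2)) :=
      (Real.tendsto_arctan_atTop.mono_right nhdsWithin_le_nhds).comp h1
    exact h2.div_const c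
  have hGlim : Tendsto G (nhdsWithin (π/2) (Set.Iio (π/2))) (nhds (G (π/2))) :=
    (hGcont.tendsto (π/2)).mono_left nhdsWithin_le_nhds
  have hGlim' : Tendsto G (nhdsWithin (π/2) (Set.Iio (π/2))) (nhds (π / 2 / c)) := by
    apply hFlim.congr'
    filter_upwards [Ioo_mem_nhdsLT_of_mem (Set.mem_Ioc.mpr ⟨Real.pi_div_two_pos, le_refl _⟩)]
      with b hb
    exact (hGF b ⟨hb.1.le, hb.2⟩).symm
  have := tendsto_nhds_unique hGlim hGlim'
  rw [show π / (2 * c) = π / 2 / c from by ring]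
  exact this

lemma swap_int {B : ℝ} (hB0 : 0 ≤ B) (hB1 : B < 1) (h : ℕ → ℝ → ℝ)
    (hc : ∀ n, Continuous (h n)) (hnn : ∀ n θ, 0 ≤ h n θ)
    (hle : ∀ n θ, h n θ ≤ B ^ n) :
    ∫ θ in Set.Ioc (0:ℝ) (π/2), ∑' n, h n θ
      = ∑' n, ∫ θ in Set.Ioc (0:ℝ) (π/2), h n θ := by
  apply MeasureTheory.integral_tsum
  · exact fun n => (hc n).aestronglyMeasurable
  · apply ne_of_lt
    have key : ∀ n, ∫⁻ θ in Set.Ioc (0:ℝ) (π/2), ‖h n θ‖₊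
        ≤ ENNReal.ofReal (B ^ n) * ENNReal.ofReal (π/2) := by
      intro n
      calc ∫⁻ θ in Set.Ioc (0:ℝ) (π/2), ‖h n θ‖₊
          ≤ ∫⁻ _θ in Set.Ioc (0:ℝ) (π/2), ENNReal.ofReal (B ^ n) := by
            apply lintegral_mono
            intro θ
            simp only []
            rw [← enorm_eq_nnnorm, Real.enorm_eq_ofReal (hnn n θ)]
            exact ENNReal.ofReal_le_ofReal (hle n θ)
        _ = ENNReal.ofReal (B ^ n) * ENNReal.ofReal (π/2) := by
            rw [MeasureTheory.lintegral_const, Measure.restrict_apply MeasurableSet.univ,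
              Set.univ_inter, Real.volume_Ioc]
            norm_num
    calc ∑' n, ∫⁻ θ in Set.Ioc (0:ℝ) (π/2), ‖h n θ‖₊
        ≤ ∑' n : ℕ, ENNReal.ofReal (B ^ n) * ENNReal.ofReal (π/2) :=
          ENNReal.tsum_le_tsum key
      _ = (∑' n : ℕ, ENNReal.ofReal B ^ n) * ENNReal.ofReal (π/2) := by
          rw [ENNReal.tsum_mul_right]
          congr 1
          exact tsum_congr fun n => by rw [ENNReal.ofReal_pow hB0]
      _ = (1 - ENNReal.ofReal B)⁻¹ * ENNReal.ofReal (π/2) := by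
          rw [ENNReal.tsum_geometric]
      _ < ⊤ := by
          apply ENNReal.mul_lt_top
          · rw [ENNReal.inv_lt_top]
            exact tsub_pos_of_lt (ENNReal.ofReal_lt_one.mpr hB1)
          · exact ENNReal.ofReal_lt_top

lemma tsum_cb {t : ℝ} (ht0 : 0 ≤ t) (ht1 : t < 1) :
    ∑' n, cb n * t ^ n = 1 / Real.sqrt (1 - t) := by
  have hswap := swap_int ht0 ht1 (fun n θ => (t * Real.sin θ ^ 2) ^ n)
    (fun n => by continuity) (fun n θ => by positivity)
    (fun n θ => by
      apply pow_le_pow_left₀ (by positivity)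
      nlinarith [Real.sin_sq_le_one θ])
  have hL : ∫ θ in Set.Ioc (0:ℝ) (π/2), ∑' n, (t * Real.sin θ ^ 2) ^ n
      = π / (2 * Real.sqrt (1 - t)) := by
    have hpt : ∀ θ : ℝ, ∑' n, (t * Real.sin θ ^ 2) ^ n = (1 - t * Real.sin θ ^ 2)⁻¹ :=
      fun θ => tsum_geometric_of_lt_one (by positivity)
        (by nlinarith [Real.sin_sq_le_one θ])
    simp only [hpt]
    rw [← intervalIntegral.integral_of_le (by positivity)]
    exact integral_rat ht0 ht1
  have hR : ∀ n : ℕ, ∫ θ in Set.Ioc (0:ℝ) (π/2), (t * Real.sin θ ^ 2) ^ n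
      = π / 2 * (cb n * t ^ n) := by
    intro n
    have hpt : ∀ θ : ℝ, (t * Real.sin θ ^ 2) ^ n = t ^ n * Real.sin θ ^ (2 * n) := by
      intro θ; rw [mul_pow, pow_mul]
    simp only [hpt]
    rw [MeasureTheory.integral_const_mul, ← intervalIntegral.integral_of_le (by positivity),
      wallis]
    ring
  rw [hL] at hswap
  simp only [hR] at hswap
  rw [tsum_mul_left] at hswap
  have hs0 : Real.sqrt (1 - t) ≠ 0 := (Real.sqrt_pos.mpr (by linarith)).ne'
  have hS : ∑' n, cb n * t ^ n = π / (2 * Real.sqrt (1 - t)) / (π / 2) := by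
    rw [eq_div_iff (by positivity : (π:ℝ)/2 ≠ 0)]
    linarith [hswap]
  rw [hS]
  field_simp

/-- **Elliptic integral representation of the hypergeometric series.** For `0 < α < 1`,
`∫_0^1 du/√((1-u²)(1-αu²)) = (π/2) Σ_{n≥0} C(2n,n)² (α/16)^n`. -/
theorem elliptic_integral_hypergeometric (α : ℝ) (hα0 : 0 < α) (hα1 : α < 1) :
    ∫ u in (0 : ℝ)..1, 1 / Real.sqrt ((1 - u ^ 2) * (1 - α * u ^ 2))
      = π / 2 * ∑' n : ℕ, ((Nat.centralBinom n : ℝ)) ^ 2 * (α / 16) ^ n := by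
  set g : ℝ → ℝ := fun u => 1 / Real.sqrt ((1 - u ^ 2) * (1 - α * u ^ 2)) with hg
  have himg : Real.sin '' Set.Ioo 0 (π/2) = Set.Ioo 0 1 := by
    ext u
    constructor
    · rintro ⟨θ, hθ, rfl⟩
      have h1 : Real.sin θ < 1 := by
        have := Real.strictMonoOn_sin
          (Set.mem_Icc.mpr ⟨by linarith [hθ.1, Real.pi_div_two_pos], hθ.2.le⟩)
          (Set.mem_Icc.mpr ⟨by linarith [Real.pi_div_two_pos], le_refl _⟩) hθ.2
        simpa using this
      exact ⟨Real.sin_pos_of_pos_of_lt_pi hθ.1 (by linarith [Real.pi_pos, hθ.2]), h1⟩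
    · intro hu
      refine
        ⟨Real.arcsin u, Set.mem_Ioo.mpr
          ⟨Real.arcsin_pos.mpr hu.1, Real.arcsin_lt_pi_div_two.mpr hu.2⟩,
          Real.sin_arcsin (by linarith [hu.1]) hu.2.le⟩
  have hCoV := MeasureTheory.integral_image_eq_integral_abs_deriv_smul
    (s := Set.Ioo 0 (π/2)) (f := Real.sin) (f' := Real.cos) measurableSet_Ioo
    (fun x _ => (Real.hasDerivAt_sin x).hasDerivWithinAt)
    (Real.injOn_sin.mono (fun x hx => Set.mem_Icc.mpr ⟨by linarith [hx.1, Real.pi_div_two_pos], hx.2.le⟩)) g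
  rw [himg] at hCoV
  have hstep1 : (∫ u in (0:ℝ)..1, g u)
      = ∫ x in Set.Ioo (0:ℝ) (π/2), |Real.cos x| • g (Real.sin x) := by
    rw [intervalIntegral.integral_of_le zero_le_one,
      MeasureTheory.integral_Ioc_eq_integral_Ioo, hCoV]
  have hstep2 : ∫ x in Set.Ioo (0:ℝ) (π/2), |Real.cos x| • g (Real.sin x)
      = ∫ x in Set.Ioo (0:ℝ) (π/2), (Real.sqrt (1 - α * Real.sin x ^ 2))⁻¹ := by
    apply MeasureTheory.setIntegral_congr_fun measurableSet_Ioo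
    intro x hx
    have hcos : 0 < Real.cos x :=
      Real.cos_pos_of_mem_Ioo ⟨by linarith [hx.1, Real.pi_div_two_pos], hx.2⟩
    have hz : 0 < 1 - α * Real.sin x ^ 2 := by
      nlinarith [Real.sin_sq_le_one x, sq_nonneg (Real.sin x)]
    have h1 : 1 - Real.sin x ^ 2 = Real.cos x ^ 2 := by
      rw [Real.cos_sq']
    simp only [hg, smul_eq_mul, h1]
    rw [Real.sqrt_mul (sq_nonneg _), Real.sqrt_sq hcos.le]
    rw [abs_of_pos hcos, one_div, mul_inv, ← mul_assoc, mul_inv_cancel₀ hcos.ne', one_mul]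
  have hser : ∀ x : ℝ, (Real.sqrt (1 - α * Real.sin x ^ 2))⁻¹
      = ∑' n, cb n * (α * Real.sin x ^ 2) ^ n := by
    intro x
    rw [tsum_cb (mul_nonneg hα0.le (sq_nonneg _))
      (by nlinarith [Real.sin_sq_le_one x, sq_nonneg (Real.sin x)]), one_div]
  have hswap := swap_int hα0.le hα1 (fun n θ => cb n * (α * Real.sin θ ^ 2) ^ n)
    (fun n => by continuity)
    (fun n θ => mul_nonneg (cb_nonneg n) (pow_nonneg (mul_nonneg hα0.le (sq_nonneg _)) n))
    (fun n θ => by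
      calc cb n * (α * Real.sin θ ^ 2) ^ n ≤ 1 * α ^ n := by
            apply mul_le_mul (cb_le_one n) ?_ (by positivity) zero_le_one
            apply pow_le_pow_left₀ (by positivity)
            nlinarith [Real.sin_sq_le_one θ]
        _ = α ^ n := one_mul _)
  have hterm : ∀ n : ℕ, ∫ θ in Set.Ioc (0:ℝ) (π/2), cb n * (α * Real.sin θ ^ 2) ^ n
      = π / 2 * ((Nat.centralBinom n : ℝ) ^ 2 * (α / 16) ^ n) := by
    intro n
    have hpt : ∀ θ : ℝ, cb n * (α * Real.sin θ ^ 2) ^ n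
        = cb n * α ^ n * Real.sin θ ^ (2 * n) := by
      intro θ; rw [mul_pow, pow_mul]; ring
    simp only [hpt]
    rw [MeasureTheory.integral_const_mul, ← intervalIntegral.integral_of_le (by positivity),
      wallis]
    have h16 : cb n ^ 2 * α ^ n = (Nat.centralBinom n : ℝ) ^ 2 * (α / 16) ^ n := by
      rw [cb, div_pow, div_pow]
      rw [show ((4:ℝ) ^ n) ^ 2 = 16 ^ n from by rw [← pow_mul, mul_comm, pow_mul]; norm_num]
      ring
    calc cb n * α ^ n * (π / 2 * cb n) = π / 2 * (cb n ^ 2 * α ^ n) := by ring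
      _ = _ := by rw [h16]
  rw [hstep1, hstep2, ← MeasureTheory.integral_Ioc_eq_integral_Ioo]
  simp only [hser]
  rw [hswap]
  simp only [hterm]
  rw [tsum_mul_left]
end

section
/- Let F(α) = ₂F₁(1/2,1/2;1;α) and define u(α) = F(1-α)/(2F(α)) for 0 < α < 1. Then du/dα = -1/(2πα(1-α)F(α)²). -/
open scoped Real

/-- The hypergeometric function `F(α) = ₂F₁(1/2,1/2;1;α) = Σ C(2n,n)² (α/16)^n`. -/
noncomputable def F (α : ℝ) : ℝ :=
  ∑' n : ℕ, ((Nat.centralBinom n : ℝ)) ^ 2 * (α / 16) ^ n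

namespace PeriodRatioAux

open Filter Topology Set

/-- The power series coefficients of `F`. -/
noncomputable def a (n : ℕ) : ℝ := ((Nat.centralBinom n : ℝ) / 4 ^ n) ^ 2

lemma a_zero : a 0 = 1 := by simp [a]

lemma a_one : a 1 = 1 / 4 := by
  have h : Nat.centralBinom 1 = 2 := rfl
  norm_num [a, h]

lemma a_pos (n : ℕ) : 0 < a n := by
  have h : (0:ℝ) < (Nat.centralBinom n : ℝ) := by exact_mod_cast Nat.centralBinom_pos n
  have h4 : (0:ℝ) < 4 ^ n := by positivity
  exact pow_pos (div_pos h h4) 2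

/-- The fundamental recurrence `(2n+2)² a(n+1) = (2n+1)² a(n)`. -/
lemma a_rec (n : ℕ) : (2*(n:ℝ)+2)^2 * a (n+1) = (2*(n:ℝ)+1)^2 * a n := by
  have h := Nat.succ_mul_centralBinom_succ n
  have key : ((n:ℝ)+1) * (Nat.centralBinom (n+1) : ℝ)
      = 2 * (2*(n:ℝ)+1) * (Nat.centralBinom n : ℝ) := by
    exact_mod_cast h
  have h4 : (4:ℝ) ^ n ≠ 0 := by positivity
  have h4' : (4:ℝ) ^ (n+1) ≠ 0 := by positivity
  have hsq : (((n:ℝ)+1) * (Nat.centralBinom (n+1) : ℝ))^2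
      = (2 * (2*(n:ℝ)+1) * (Nat.centralBinom n : ℝ))^2 := by rw [key]
  unfold a
  rw [pow_succ]
  field_simp
  linear_combination (4 * ((4:ℝ)^n)^2) * hsq

lemma a_succ_le (n : ℕ) : a (n+1) ≤ a n := by
  have h := a_rec n
  have h1 : (0:ℝ) < (2*(n:ℝ)+2)^2 := by positivity
  have h2 : (2*(n:ℝ)+2)^2 * a (n+1) ≤ (2*(n:ℝ)+2)^2 * a n := by
    rw [h]
    have hn : (0:ℝ) ≤ (n:ℝ) := Nat.cast_nonneg n
    nlinarith [a_pos n]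
  exact le_of_mul_le_mul_left h2 h1

lemma a_antitone : Antitone a := antitone_nat_of_succ_le a_succ_le

lemma a_le_one (n : ℕ) : a n ≤ 1 := by
  have := a_antitone (Nat.zero_le n)
  simpa [a_zero] using this

/-- coefficients of the derivative series. -/
noncomputable def b (n : ℕ) : ℝ := ((n:ℝ)+1) * a (n+1)

lemma b_pos (n : ℕ) : 0 < b n := by
  have := a_pos (n+1); unfold b; positivity

lemma b_mono : Monotone b := by
  apply monotone_nat_of_le_succ
  intro n
  have h := a_rec (n+1)
  have hp := a_pos (n+1)
  have hp2 := a_pos (n+2)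
  have h1 : (0:ℝ) < (2*((n:ℝ)+1)+2)^2 := by positivity
  have h2 : (2*((n:ℝ)+1)+2)^2 * (((n:ℝ)+1) * a (n+1))
      ≤ (2*((n:ℝ)+1)+2)^2 * (((n:ℝ)+1+1) * a (n+1+1)) := by
    have hn : (0:ℝ) ≤ (n:ℝ) := Nat.cast_nonneg n
    have key : (2*((n:ℝ)+1)+2)^2 * (((n:ℝ)+1+1) * a (n+1+1))
        = ((n:ℝ)+2) * ((2*((n:ℝ)+1)+1)^2 * a (n+1)) := by
      push_cast at h ⊢
      linear_combination ((n:ℝ)+2) * h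
    rw [key]
    nlinarith [mul_nonneg hn hp.le, hp]
  have := le_of_mul_le_mul_left h2 h1
  unfold b
  push_cast
  linarith [this]

/-- Wallis product identity: `(2n+1) aₙ Wₙ = 1`. -/
lemma wallis_identity (n : ℕ) : (2*(n:ℝ)+1) * a n * Real.Wallis.W n = 1 := by
  induction n with
  | zero => simp [a_zero, Real.Wallis.W]
  | succ n ih =>
    rw [Real.Wallis.W_succ]
    have hrec := a_rec n
    have h1 : (2*(n:ℝ)+1) ≠ 0 := by positivity
    have h3 : (2*(n:ℝ)+3) ≠ 0 := by positivity
    have key : (2*(↑n+1:ℝ)+1) * a (n+1) * ((2*(n:ℝ)+2)/(2*n+1) * ((2*n+2)/(2*n+3))) =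
        (2*(n:ℝ)+1) * a n := by
      push_cast
      field_simp
      nlinarith [hrec]
    push_cast
    push_cast at key ih
    calc (2*((n:ℝ)+1)+1) * a (n+1) * (Real.Wallis.W n * ((2*↑n+2)/(2*↑n+1) * ((2*↑n+2)/(2*↑n+3))))
        = ((2*((n:ℝ)+1)+1) * a (n+1) * ((2*(n:ℝ)+2)/(2*↑n+1) * ((2*↑n+2)/(2*↑n+3)))) *
            Real.Wallis.W n := by ring
      _ = ((2*(n:ℝ)+1) * a n) * Real.Wallis.W n := by rw [key]
      _ = (2*(n:ℝ)+1) * a n * Real.Wallis.W n := by ring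
      _ = 1 := ih

lemma tendsto_mul_a : Tendsto (fun n : ℕ => (2*(n:ℝ)+1) * a n) atTop (𝓝 (2/π)) := by
  have hW := Real.Wallis.tendsto_W_nhds_pi_div_two
  have hπ : (π/2 : ℝ) ≠ 0 := by positivity
  have := hW.inv₀ hπ
  have heq : ∀ n : ℕ, (Real.Wallis.W n)⁻¹ = (2*(n:ℝ)+1) * a n := by
    intro n
    have h := wallis_identity n
    have hWp := Real.Wallis.W_pos n
    field_simp
    linarith [h]
  have h2 : ((π:ℝ)/2)⁻¹ = 2/π := by
    field_simp
  rw [h2] at this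
  exact this.congr heq

lemma tendsto_lin (c d : ℝ) (hc : 0 < c) :
    Tendsto (fun n : ℕ => c*(n:ℝ)+d) atTop atTop :=
  tendsto_atTop_add_const_right _ d (tendsto_natCast_atTop_atTop.const_mul_atTop hc)

lemma a_tendsto_zero : Tendsto a atTop (𝓝 0) := by
  have h1 : Tendsto (fun n : ℕ => ((2*(n:ℝ)+1))⁻¹) atTop (𝓝 0) :=
    (tendsto_lin 2 1 two_pos).inv_tendsto_atTop
  have := tendsto_mul_a.mul h1
  rw [mul_zero] at this
  apply this.congr
  intro n
  have : (2*(n:ℝ)+1) ≠ 0 := by positivity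
  field_simp

lemma b_tendsto : Tendsto b atTop (𝓝 (1/π)) := by
  have h1 : Tendsto (fun n : ℕ => (2*((n:ℝ)+1)+1) * a (n+1)) atTop (𝓝 (2/π)) := by
    have := tendsto_mul_a.comp (tendsto_add_atTop_nat 1)
    apply this.congr
    intro n; simp only [Function.comp_apply]; push_cast; ring_nf
  have h2 : Tendsto (fun n : ℕ => ((n:ℝ)+1)/(2*((n:ℝ)+1)+1)) atTop (𝓝 (1/2)) := by
    have key : ∀ n : ℕ, ((n:ℝ)+1)/(2*((n:ℝ)+1)+1) = 1/2 - (1/2) * (2*((n:ℝ)+1)+1)⁻¹ := by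
      intro n
      have : (2*((n:ℝ)+1)+1) ≠ 0 := by positivity
      field_simp
      ring
    have hd : Tendsto (fun n : ℕ => (2*((n:ℝ)+1)+1)⁻¹) atTop (𝓝 0) := by
      apply Tendsto.inv_tendsto_atTop
      apply (tendsto_lin 2 3 two_pos).congr
      intro n; push_cast; ring
    have := (tendsto_const_nhds (x := (1/2:ℝ)) (f := atTop (α := ℕ))).sub
      (hd.const_mul (1/2))
    rw [mul_zero, sub_zero] at this
    exact this.congr fun n => (key n).symm
  have h3 := h1.mul h2
  have : (2/π) * (1/2 : ℝ) = 1/π := by ring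
  rw [this] at h3
  apply h3.congr
  intro n
  have hne : (2*((n:ℝ)+1)+1) ≠ 0 := by positivity
  unfold b
  field_simp

lemma b_le (n : ℕ) : b n ≤ 1/π := b_mono.ge_of_tendsto b_tendsto n

/- ### Summability lemmas -/

lemma abs_a (n : ℕ) : |a n| = a n := abs_of_pos (a_pos n)

lemma summable_pow_geom (k : ℕ) {x : ℝ} (hx : |x| < 1) :
    Summable fun n : ℕ => (n:ℝ)^k * x^n :=
  summable_pow_mul_geometric_of_norm_lt_one k (by rwa [Real.norm_eq_abs])

lemma summable_geom {x : ℝ} (h0 : 0 ≤ x) (hx : x < 1) : Summable fun n : ℕ => x^n :=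
  summable_geometric_of_lt_one h0 hx

lemma summable_u1 {r : ℝ} (h0 : 0 ≤ r) (h1 : r < 1) :
    Summable fun n : ℕ => (n:ℝ) * r^(n-1) := by
  have hr : |r| < 1 := by rwa [abs_of_nonneg h0]
  rw [← summable_nat_add_iff 1]
  have base := (summable_pow_geom 1 hr).add (summable_pow_geom 0 hr)
  apply base.congr
  intro n
  have e : n + 1 - 1 = n := by omega
  rw [e]
  push_cast
  ring

lemma summable_u2 {r : ℝ} (h0 : 0 ≤ r) (h1 : r < 1) :
    Summable fun n : ℕ => (n:ℝ)^2 * r^(n-1-1) := by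
  have hr : |r| < 1 := by rwa [abs_of_nonneg h0]
  rw [← summable_nat_add_iff 2]
  have base := (summable_pow_geom 2 hr).add
    (((summable_pow_geom 1 hr).mul_left 4).add ((summable_pow_geom 0 hr).mul_left 4))
  apply base.congr
  intro n
  have e : n + 2 - 1 - 1 = n := by omega
  rw [e]
  push_cast
  ring

lemma summable_u3 {r : ℝ} (h0 : 0 ≤ r) (h1 : r < 1) :
    Summable fun n : ℕ => (n:ℝ)^2 * r^(n-1) := by
  have hr : |r| < 1 := by rwa [abs_of_nonneg h0]
  rw [← summable_nat_add_iff 1]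
  have base := (summable_pow_geom 2 hr).add
    (((summable_pow_geom 1 hr).mul_left 2).add (summable_pow_geom 0 hr))
  apply base.congr
  intro n
  have e : n + 1 - 1 = n := by omega
  rw [e]
  push_cast
  ring

lemma summable_F_series {x : ℝ} (hx : |x| < 1) : Summable fun n => a n * x^n := by
  apply Summable.of_norm_bounded (g := fun n : ℕ => |x|^n) (summable_geom (abs_nonneg x) hx)
  intro n
  rw [Real.norm_eq_abs, abs_mul, abs_pow, abs_a]
  calc a n * |x|^n ≤ 1 * |x|^n :=
        mul_le_mul_of_nonneg_right (a_le_one n) (by positivity)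
    _ = |x|^n := one_mul _

lemma summable_D_series {x : ℝ} (hx : |x| < 1) :
    Summable fun n : ℕ => a n * ((n:ℝ) * x^(n-1)) := by
  apply Summable.of_norm_bounded (g := fun n : ℕ => (n:ℝ) * |x|^(n-1))
    (summable_u1 (abs_nonneg x) hx)
  intro n
  rw [Real.norm_eq_abs, abs_mul, abs_mul, abs_pow, abs_a, Nat.abs_cast]
  have h1 : a n * ((n:ℝ) * |x|^(n-1)) ≤ 1 * ((n:ℝ) * |x|^(n-1)) :=
    mul_le_mul_of_nonneg_right (a_le_one n) (by positivity)
  linarith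

lemma summable_E_series {x : ℝ} (hx : |x| < 1) :
    Summable fun n : ℕ => a n * ((n:ℝ) * (((n-1:ℕ):ℝ) * x^(n-1-1))) := by
  apply Summable.of_norm_bounded (g := fun n : ℕ => (n:ℝ)^2 * |x|^(n-1-1))
    (summable_u2 (abs_nonneg x) hx)
  intro n
  rw [Real.norm_eq_abs, abs_mul, abs_mul, abs_mul, abs_pow, abs_a, Nat.abs_cast, Nat.abs_cast]
  have hc : ((n-1:ℕ):ℝ) ≤ (n:ℝ) := by exact_mod_cast Nat.sub_le n 1
  have hp : (0:ℝ) ≤ |x|^(n-1-1) := by positivity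
  have hn : (0:ℝ) ≤ (n:ℝ) := Nat.cast_nonneg n
  calc a n * ((n:ℝ) * (((n-1:ℕ):ℝ) * |x|^(n-1-1)))
      ≤ 1 * ((n:ℝ) * ((n:ℝ) * |x|^(n-1-1))) := by
        apply mul_le_mul (a_le_one n) _ (by positivity) (by norm_num)
        exact mul_le_mul_of_nonneg_left (mul_le_mul_of_nonneg_right hc hp) hn
    _ = (n:ℝ)^2 * |x|^(n-1-1) := by ring

/- ### Derivatives -/

noncomputable def D (x : ℝ) : ℝ := ∑' n : ℕ, a n * ((n:ℝ) * x^(n-1))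

noncomputable def E (x : ℝ) : ℝ := ∑' n : ℕ, a n * ((n:ℝ) * (((n-1:ℕ):ℝ) * x^(n-1-1)))

lemma F_eq (x : ℝ) : F x = ∑' n : ℕ, a n * x^n := by
  unfold F a
  apply tsum_congr
  intro n
  have h16 : (16:ℝ)^n = ((4:ℝ)^n)^2 := by
    have : (16:ℝ) = 4^2 := by norm_num
    rw [this, ← pow_mul, mul_comm, pow_mul]
  rw [div_pow, div_pow, h16]
  ring

lemma hasDerivAt_F {x : ℝ} (hx : |x| < 1) : HasDerivAt F (D x) x := by
  have hfun : F = fun y => ∑' n : ℕ, a n * y^n := funext F_eq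
  rw [hfun]
  set r : ℝ := (|x| + 1) / 2 with hr
  have hxr : |x| < r := by rw [hr]; linarith
  have hr1 : r < 1 := by rw [hr]; linarith
  have hr0 : 0 ≤ r := le_trans (abs_nonneg x) hxr.le
  refine hasDerivAt_tsum_of_isPreconnected (y₀ := (0:ℝ)) (summable_u1 hr0 hr1) Metric.isOpen_ball
    (convex_ball (0:ℝ) r).isPreconnected
    (fun n y _ => (hasDerivAt_pow n y).const_mul (a n)) ?_ ?_ ?_ ?_
  · intro n y hy
    have hy' : |y| ≤ r := by
      have := Metric.mem_ball.1 hy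
      rw [Real.dist_eq, sub_zero] at this
      exact this.le
    rw [Real.norm_eq_abs, abs_mul, abs_mul, abs_pow, abs_a, Nat.abs_cast]
    have hpow : |y|^(n-1) ≤ r^(n-1) := pow_le_pow_left₀ (abs_nonneg y) hy' _
    have h1 : a n * ((n:ℝ) * |y|^(n-1)) ≤ 1 * ((n:ℝ) * r^(n-1)) := by
      apply mul_le_mul (a_le_one n) _ (by positivity) (by norm_num)
      exact mul_le_mul_of_nonneg_left hpow (Nat.cast_nonneg n)
    linarith
  · exact Metric.mem_ball.2 (by rw [Real.dist_eq, sub_zero, abs_zero]; linarith [abs_nonneg x, hxr])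
  · exact summable_F_series (by norm_num : |(0:ℝ)| < 1)
  · exact Metric.mem_ball.2 (by rwa [Real.dist_eq, sub_zero])

lemma hasDerivAt_D {x : ℝ} (hx : |x| < 1) : HasDerivAt D (E x) x := by
  have hfun : D = fun y => ∑' n : ℕ, a n * ((n:ℝ) * y^(n-1)) := rfl
  rw [hfun]
  set r : ℝ := (|x| + 1) / 2 with hr
  have hxr : |x| < r := by rw [hr]; linarith
  have hr1 : r < 1 := by rw [hr]; linarith
  have hr0 : 0 ≤ r := le_trans (abs_nonneg x) hxr.le
  refine hasDerivAt_tsum_of_isPreconnected (y₀ := (0:ℝ)) (summable_u2 hr0 hr1) Metric.isOpen_ball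
    (convex_ball (0:ℝ) r).isPreconnected
    (fun n y _ => ((hasDerivAt_pow (n-1) y).const_mul ((n:ℝ))).const_mul (a n)) ?_ ?_ ?_ ?_
  · intro n y hy
    have hy' : |y| ≤ r := by
      have := Metric.mem_ball.1 hy
      rw [Real.dist_eq, sub_zero] at this
      exact this.le
    rw [Real.norm_eq_abs, abs_mul, abs_mul, abs_mul, abs_pow, abs_a, Nat.abs_cast, Nat.abs_cast]
    have hpow : |y|^(n-1-1) ≤ r^(n-1-1) := pow_le_pow_left₀ (abs_nonneg y) hy' _
    have hc : ((n-1:ℕ):ℝ) ≤ (n:ℝ) := by exact_mod_cast Nat.sub_le n 1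
    have h1 : a n * ((n:ℝ) * (((n-1:ℕ):ℝ) * |y|^(n-1-1))) ≤ 1 * ((n:ℝ) * ((n:ℝ) * r^(n-1-1))) := by
      apply mul_le_mul (a_le_one n) _ (by positivity) (by norm_num)
      apply mul_le_mul_of_nonneg_left _ (Nat.cast_nonneg n)
      apply mul_le_mul hc hpow (by positivity) (Nat.cast_nonneg n)
    calc a n * ((n:ℝ) * (((n-1:ℕ):ℝ) * |y|^(n-1-1))) ≤ 1 * ((n:ℝ) * ((n:ℝ) * r^(n-1-1))) := h1
      _ = (n:ℝ)^2 * r^(n-1-1) := by ring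
  · exact Metric.mem_ball.2 (by rw [Real.dist_eq, sub_zero, abs_zero]; linarith [abs_nonneg x, hxr])
  · exact summable_D_series (by norm_num : |(0:ℝ)| < 1)
  · exact Metric.mem_ball.2 (by rwa [Real.dist_eq, sub_zero])

/-- The hypergeometric ODE. -/
lemma ode {x : ℝ} (hx : |x| < 1) :
    x * (1-x) * E x + (1 - 2*x) * D x - F x / 4 = 0 := by
  have hF := summable_F_series hx
  have hD := summable_D_series hx
  have hE := summable_E_series hx
  have hS1 : Summable (fun n : ℕ => a n * ((n:ℝ)^2 * x^(n-1))) := by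
    apply Summable.of_norm_bounded (g := fun n : ℕ => (n:ℝ)^2 * |x|^(n-1))
      (summable_u3 (abs_nonneg x) hx)
    intro n
    rw [Real.norm_eq_abs, abs_mul, abs_mul, abs_pow, abs_a, abs_pow, Nat.abs_cast]
    have h1 : a n * ((n:ℝ)^2 * |x|^(n-1)) ≤ 1 * ((n:ℝ)^2 * |x|^(n-1)) :=
      mul_le_mul_of_nonneg_right (a_le_one n) (by positivity)
    linarith
  have hS2 : Summable (fun n : ℕ => a n * (((n:ℝ)+1/2)^2 * x^n)) := by
    have base := (summable_pow_geom 2 hx).add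
      (((summable_pow_geom 1 hx).mul_left 1).add (((summable_pow_geom 0 hx).mul_left (1/4))))
    apply Summable.of_norm_bounded
      (g := fun n : ℕ => (n:ℝ)^2 * |x|^n + (1 * ((n:ℝ)^1 * |x|^n) + 1/4 * ((n:ℝ)^0 * |x|^n)))
      (by
        have hx' : |(|x|)| < 1 := by rwa [abs_abs]
        exact (summable_pow_geom 2 hx').add
          (((summable_pow_geom 1 hx').mul_left 1).add (((summable_pow_geom 0 hx').mul_left (1/4)))))
    intro n
    rw [Real.norm_eq_abs, abs_mul, abs_mul, abs_pow, abs_a]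
    have habs : |(n:ℝ)+1/2| = (n:ℝ)+1/2 := abs_of_pos (by positivity)
    rw [abs_pow, habs]
    have h1 : a n * (((n:ℝ)+1/2)^2 * |x|^n) ≤ 1 * (((n:ℝ)+1/2)^2 * |x|^n) :=
      mul_le_mul_of_nonneg_right (a_le_one n) (by positivity)
    have hn : (0:ℝ) ≤ (n:ℝ) := Nat.cast_nonneg n
    have hp : (0:ℝ) ≤ |x|^n := by positivity
    nlinarith [h1]
  have hL : x*(1-x)*E x + (1-2*x)*D x - F x / 4
      = ∑' n : ℕ, (x*(1-x)*(a n * ((n:ℝ) * (((n-1:ℕ):ℝ) * x^(n-1-1))))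
          + (1-2*x)*(a n * ((n:ℝ) * x^(n-1))) - (a n * x^n)/4) := by
    rw [F_eq]
    unfold D E
    rw [← tsum_mul_left (a := x*(1-x)), ← tsum_mul_left (a := 1-2*x), ← tsum_div_const]
    rw [← Summable.tsum_add (hE.mul_left (x*(1-x))) (hD.mul_left (1-2*x)),
      ← Summable.tsum_sub ((hE.mul_left (x*(1-x))).add (hD.mul_left (1-2*x))) (hF.div_const 4)]
  have hR : (∑' n : ℕ, (x*(1-x)*(a n * ((n:ℝ) * (((n-1:ℕ):ℝ) * x^(n-1-1))))
          + (1-2*x)*(a n * ((n:ℝ) * x^(n-1))) - (a n * x^n)/4))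
      = ∑' n : ℕ, (a n * ((n:ℝ)^2 * x^(n-1)) - a n * (((n:ℝ)+1/2)^2 * x^n)) := by
    apply tsum_congr
    intro n
    match n with
    | 0 => norm_num; ring
    | 1 => norm_num; ring
    | (n+2) =>
      have e1 : n + 2 - 1 - 1 = n := by omega
      have e2 : n + 2 - 1 = n + 1 := by omega
      rw [e1, e2]
      push_cast
      ring
  have hshift : (∑' n : ℕ, a n * ((n:ℝ)^2 * x^(n-1)))
      = ∑' n : ℕ, a n * (((n:ℝ)+1/2)^2 * x^n) := by
    rw [Summable.tsum_eq_zero_add hS1]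
    have h0 : a 0 * ((0:ℕ):ℝ)^2 * x^(0-1) = 0 := by norm_num
    have : a 0 * (((0:ℕ):ℝ)^2 * x^(0-1)) = 0 := by norm_num
    rw [this, zero_add]
    apply tsum_congr
    intro n
    have h := a_rec n
    have e : n + 1 - 1 = n := by omega
    rw [e]
    push_cast
    linear_combination (x^n / 4) * h
  rw [hL, hR, Summable.tsum_sub hS1 hS2, hshift, sub_self]

/- ### Values and positivity -/

lemma F_zero : F 0 = 1 := by
  rw [F_eq]
  rw [tsum_eq_single 0 (fun n hn => by simp [zero_pow hn])]
  simp [a_zero]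

lemma one_le_F {x : ℝ} (h0 : 0 ≤ x) (h1 : x < 1) : 1 ≤ F x := by
  rw [F_eq]
  have habs : |x| < 1 := by rwa [abs_of_nonneg h0]
  have := Summable.le_tsum (summable_F_series habs) 0
    (fun j _ => mul_nonneg (a_pos j).le (pow_nonneg h0 j))
  simpa [a_zero] using this

lemma F_pos {x : ℝ} (h0 : 0 ≤ x) (h1 : x < 1) : 0 < F x :=
  lt_of_lt_of_le one_pos (one_le_F h0 h1)

/- ### The Wronskian is constant -/

noncomputable def Wf (t : ℝ) : ℝ := t * (1-t) * (D t * F (1-t) + D (1-t) * F t)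

lemma hasDerivAt_Wf {t : ℝ} (h0 : 0 < t) (h1 : t < 1) : HasDerivAt Wf 0 t := by
  have hxt : |t| < 1 := abs_lt.2 ⟨by linarith, h1⟩
  have hxs : |1-t| < 1 := abs_lt.2 ⟨by linarith, by linarith⟩
  have hneg : HasDerivAt (fun s : ℝ => 1 - s) (-1) t := by
    simpa using (hasDerivAt_id t).const_sub 1
  have hF1 := hasDerivAt_F hxt
  have hD1 := hasDerivAt_D hxt
  have hF2 : HasDerivAt (fun s : ℝ => F (1-s)) (-(D (1-t))) t := by
    have := (hasDerivAt_F hxs).comp t hneg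
    simpa [Function.comp_def] using this
  have hD2 : HasDerivAt (fun s : ℝ => D (1-s)) (-(E (1-t))) t := by
    have := (hasDerivAt_D hxs).comp t hneg
    simpa [Function.comp_def] using this
  have hid : HasDerivAt (fun s : ℝ => s) 1 t := hasDerivAt_id t
  have hprod := (hid.mul hneg).mul ((hD1.mul hF2).add (hD2.mul hF1))
  have : Wf = fun s : ℝ => (s * (1-s)) * ((D s * F (1-s)) + (D (1-s) * F s)) := rfl
  rw [this]
  refine hprod.congr_deriv ?_
  symm
  simp only [Pi.mul_apply, Pi.add_apply]
  have o1 := ode hxt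
  have o2 := ode hxs
  have e : 1 - (1 - t) = t := by ring
  rw [e] at o2
  linear_combination (-(F (1-t))) * o1 + (F t) * o2

lemma Wf_eq_of_le {s t : ℝ} (hs : 0 < s) (hst : s ≤ t) (ht : t < 1) : Wf t = Wf s := by
  have hcont : ContinuousOn Wf (Set.Icc s t) := by
    intro y hy
    exact ((hasDerivAt_Wf (lt_of_lt_of_le hs hy.1) (lt_of_le_of_lt hy.2 ht)).continuousAt).continuousWithinAt
  have hderiv : ∀ y ∈ Set.Ico s t, HasDerivWithinAt Wf 0 (Set.Ici y) y := fun y hy =>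
    (hasDerivAt_Wf (lt_of_lt_of_le hs hy.1) (hy.2.trans ht)).hasDerivWithinAt
  exact constant_of_has_deriv_right_zero hcont hderiv t ⟨hst, le_refl t⟩

/- ### Limits at the boundary -/

lemma pi_pos' : (0:ℝ) < π := Real.pi_pos

lemma one_div_pi_lt_one : (1:ℝ)/π < 1 := by
  rw [div_lt_one pi_pos']
  linarith [Real.pi_gt_three]

lemma b_lt_one (n : ℕ) : b n < 1 := lt_of_le_of_lt (b_le n) one_div_pi_lt_one

lemma D_eq_b {x : ℝ} (hx : |x| < 1) : D x = ∑' n : ℕ, b n * x^n := by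
  unfold D
  rw [Summable.tsum_eq_zero_add (summable_D_series hx)]
  have h0 : a 0 * (((0:ℕ):ℝ) * x^(0-1)) = 0 := by norm_num
  rw [h0, zero_add]
  apply tsum_congr
  intro n
  have e : n + 1 - 1 = n := by omega
  rw [e]
  unfold b
  push_cast
  ring

lemma summable_b_series {x : ℝ} (hx : |x| < 1) : Summable fun n : ℕ => b n * x^n := by
  apply Summable.of_norm_bounded (g := fun n : ℕ => |x|^n) (summable_geom (abs_nonneg x) hx)
  intro n
  rw [Real.norm_eq_abs, abs_mul, abs_pow, abs_of_pos (b_pos n)]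
  calc b n * |x|^n ≤ 1 * |x|^n :=
        mul_le_mul_of_nonneg_right (b_lt_one n).le (by positivity)
    _ = |x|^n := one_mul _

lemma D_upper {x : ℝ} (h0 : 0 < x) (h1 : x < 1) : (1-x) * D x ≤ 1/π := by
  have hxa : |x| < 1 := abs_lt.2 ⟨by linarith, h1⟩
  rw [D_eq_b hxa]
  have hgeo : Summable fun n : ℕ => (1/π) * x^n := (summable_geom h0.le h1).mul_left _
  have hle : (∑' n : ℕ, b n * x^n) ≤ ∑' n : ℕ, (1/π) * x^n :=
    Summable.tsum_le_tsum (fun n => mul_le_mul_of_nonneg_right (b_le n) (pow_nonneg h0.le n))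
      (summable_b_series hxa) hgeo
  have hval : (∑' n : ℕ, (1/π) * x^n) = (1/π) * (1-x)⁻¹ := by
    rw [tsum_mul_left, tsum_geometric_of_lt_one h0.le h1]
  have hx1 : (0:ℝ) < 1 - x := by linarith
  calc (1-x) * (∑' n : ℕ, b n * x^n) ≤ (1-x) * ((1/π) * (1-x)⁻¹) := by
        rw [← hval]; exact mul_le_mul_of_nonneg_left hle hx1.le
    _ = 1/π := by field_simp
  
lemma D_lower {x : ℝ} (h0 : 0 < x) (h1 : x < 1) (N : ℕ) : b N * x^N ≤ (1-x) * D x := by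
  have hxa : |x| < 1 := abs_lt.2 ⟨by linarith, h1⟩
  rw [D_eq_b hxa]
  have hsum := summable_b_series hxa
  have htail : Summable fun n : ℕ => b (n+N) * x^(n+N) := (summable_nat_add_iff N).mpr hsum
  have hgeo : Summable fun n : ℕ => (b N * x^N) * x^n := (summable_geom h0.le h1).mul_left _
  have hsplit := Summable.sum_add_tsum_nat_add N hsum
  have hhead : (0:ℝ) ≤ ∑ i ∈ Finset.range N, b i * x^i :=
    Finset.sum_nonneg fun i _ => mul_nonneg (b_pos i).le (pow_nonneg h0.le i)
  have htail_ge : (b N * x^N) * (1-x)⁻¹ ≤ ∑' n : ℕ, b (n+N) * x^(n+N) := by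
    have : (∑' n : ℕ, (b N * x^N) * x^n) = (b N * x^N) * (1-x)⁻¹ := by
      rw [tsum_mul_left, tsum_geometric_of_lt_one h0.le h1]
    rw [← this]
    apply Summable.tsum_le_tsum _ hgeo htail
    intro n
    rw [pow_add, ← mul_assoc]
    have : b N * x^n * x^N = (b N * x^N) * x^n := by ring
    calc (b N * x^N) * x^n = (b N * x^n) * x^N := by ring
      _ ≤ (b (n+N) * x^n) * x^N := by
          apply mul_le_mul_of_nonneg_right _ (pow_nonneg h0.le N)
          exact mul_le_mul_of_nonneg_right (b_mono (Nat.le_add_left N n)) (pow_nonneg h0.le n)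
      _ = b (n+N) * x^n * x^N := by ring
  have hD_ge : (b N * x^N) * (1-x)⁻¹ ≤ ∑' n : ℕ, b n * x^n := by
    rw [← hsplit]
    linarith
  have hx1 : (0:ℝ) < 1 - x := by linarith
  calc b N * x^N = (1-x) * ((b N * x^N) * (1-x)⁻¹) := by field_simp
    _ ≤ (1-x) * (∑' n : ℕ, b n * x^n) := mul_le_mul_of_nonneg_left hD_ge hx1.le

lemma mem_Ioo_eventually : Set.Ioo (0:ℝ) 1 ∈ nhdsWithin (1:ℝ) (Set.Iio 1) :=
  Ioo_mem_nhdsLT_of_mem ⟨by norm_num, le_refl 1⟩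

lemma tendsto_oneSub_mul_D :
    Tendsto (fun x : ℝ => (1-x) * D x) (nhdsWithin 1 (Set.Iio 1)) (𝓝 (1/π)) := by
  rw [tendsto_order]
  constructor
  · intro l hl
    obtain ⟨N, hN⟩ := (b_tendsto.eventually (eventually_gt_nhds hl)).exists
    have hcont : Tendsto (fun x : ℝ => b N * x^N) (nhdsWithin 1 (Set.Iio 1)) (𝓝 (b N)) := by
      have := ((continuous_const.mul (continuous_pow N) : Continuous fun x : ℝ => b N * x^N)).tendsto 1
      simp only [Pi.mul_apply, one_pow, mul_one] at this
      exact this.mono_left nhdsWithin_le_nhds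
    have hev2 : ∀ᶠ x in nhdsWithin (1:ℝ) (Set.Iio 1), l < b N * x^N :=
      hcont.eventually (eventually_gt_nhds hN)
    filter_upwards [mem_Ioo_eventually, hev2] with x hx hlt
    exact lt_of_lt_of_le hlt (D_lower hx.1 hx.2 N)
  · intro u hu
    filter_upwards [mem_Ioo_eventually] with x hx
    exact lt_of_le_of_lt (D_upper hx.1 hx.2) hu

lemma F_nonneg {x : ℝ} (h0 : 0 ≤ x) (h1 : x < 1) : 0 ≤ F x := by
  rw [F_eq]
  exact tsum_nonneg fun n => mul_nonneg (a_pos n).le (pow_nonneg h0 n)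

lemma F_upper {x : ℝ} (h0 : 0 < x) (h1 : x < 1) (N : ℕ) :
    (1-x) * F x ≤ (1-x) * N + a N := by
  have hxa : |x| < 1 := abs_lt.2 ⟨by linarith, h1⟩
  have hsum := summable_F_series hxa
  rw [F_eq]
  have hsplit := Summable.sum_add_tsum_nat_add N hsum
  have hhead : (∑ i ∈ Finset.range N, a i * x^i) ≤ N := by
    calc (∑ i ∈ Finset.range N, a i * x^i) ≤ ∑ i ∈ Finset.range N, 1 := by
          apply Finset.sum_le_sum
          intro i _
          calc a i * x^i ≤ 1 * 1 := by
                apply mul_le_mul (a_le_one i) _ (pow_nonneg h0.le i) (by norm_num)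
                exact pow_le_one₀ h0.le h1.le
            _ = 1 := by norm_num
      _ = N := by simp
  have htail : Summable fun n : ℕ => a (n+N) * x^(n+N) := (summable_nat_add_iff N).mpr hsum
  have hgeo : Summable fun n : ℕ => (a N) * x^(n+N) := by
    have : Summable fun n : ℕ => (a N * x^N) * x^n := (summable_geom h0.le h1).mul_left _
    apply this.congr
    intro n
    rw [pow_add]
    ring
  have htail_le : (∑' n : ℕ, a (n+N) * x^(n+N)) ≤ a N * (1-x)⁻¹ := by
    have h2 : (∑' n : ℕ, a (n+N) * x^(n+N)) ≤ ∑' n : ℕ, (a N * x^N) * x^n := by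
      apply Summable.tsum_le_tsum _ htail ((summable_geom h0.le h1).mul_left _)
      intro n
      rw [pow_add]
      calc a (n+N) * (x^n * x^N) ≤ a N * (x^n * x^N) := by
            apply mul_le_mul_of_nonneg_right (a_antitone (Nat.le_add_left N n))
            positivity
        _ = (a N * x^N) * x^n := by ring
    have h3 : (∑' n : ℕ, (a N * x^N) * x^n) = (a N * x^N) * (1-x)⁻¹ := by
      rw [tsum_mul_left, tsum_geometric_of_lt_one h0.le h1]
    have h4 : (a N * x^N) * (1-x)⁻¹ ≤ a N * (1-x)⁻¹ := by
      apply mul_le_mul_of_nonneg_right _ (by rw [inv_nonneg]; linarith)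
      calc a N * x^N ≤ a N * 1 := by
            apply mul_le_mul_of_nonneg_left (pow_le_one₀ h0.le h1.le) (a_pos N).le
        _ = a N := mul_one _
    linarith [h2, h3 ▸ h2]
  have hx1 : (0:ℝ) < 1 - x := by linarith
  calc (1-x) * (∑' n : ℕ, a n * x^n)
      = (1-x) * ((∑ i ∈ Finset.range N, a i * x^i) + ∑' n : ℕ, a (n+N) * x^(n+N)) := by
        rw [hsplit]
    _ ≤ (1-x) * ((N:ℝ) + a N * (1-x)⁻¹) := by
        apply mul_le_mul_of_nonneg_left _ hx1.le
        linarith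
    _ = (1-x) * N + a N * ((1-x) * (1-x)⁻¹) := by ring
    _ = (1-x) * N + a N := by rw [mul_inv_cancel₀ hx1.ne', mul_one]

lemma tendsto_oneSub_mul_F :
    Tendsto (fun x : ℝ => (1-x) * F x) (nhdsWithin 1 (Set.Iio 1)) (𝓝 0) := by
  rw [tendsto_order]
  constructor
  · intro l hl
    filter_upwards [mem_Ioo_eventually] with x hx
    have : (0:ℝ) ≤ (1-x) * F x :=
      mul_nonneg (by linarith [hx.2]) (F_nonneg hx.1.le hx.2)
    linarith
  · intro u hu
    obtain ⟨N, hN⟩ := (a_tendsto_zero.eventually (eventually_lt_nhds (show (0:ℝ) < u/2 by linarith))).exists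
    have hcont : Tendsto (fun x : ℝ => (1-x) * (N:ℝ)) (nhdsWithin 1 (Set.Iio 1)) (𝓝 0) := by
      have : Tendsto (fun x : ℝ => (1-x) * (N:ℝ)) (𝓝 1) (𝓝 ((1-1) * N)) :=
        ((continuous_const.sub continuous_id).mul continuous_const).tendsto 1
      rw [show ((1:ℝ)-1) * N = 0 by ring] at this
      exact this.mono_left nhdsWithin_le_nhds
    have hev : ∀ᶠ x in nhdsWithin (1:ℝ) (Set.Iio 1), (1-x) * (N:ℝ) < u/2 :=
      hcont.eventually (eventually_lt_nhds (show (0:ℝ) < u/2 by linarith))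
    filter_upwards [mem_Ioo_eventually, hev] with x hx hlt
    have := F_upper hx.1 hx.2 N
    linarith

lemma tendsto_map : Tendsto (fun t : ℝ => 1 - t) (nhdsWithin 0 (Set.Ioi 0))
    (nhdsWithin 1 (Set.Iio 1)) := by
  rw [tendsto_nhdsWithin_iff]
  constructor
  · have : Tendsto (fun t : ℝ => 1 - t) (𝓝 0) (𝓝 (1 - 0)) :=
      (continuous_const.sub continuous_id).tendsto 0
    rw [sub_zero] at this
    exact this.mono_left nhdsWithin_le_nhds
  · filter_upwards [self_mem_nhdsWithin] with t ht
    simp only [Set.mem_Iio]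
    have : (0:ℝ) < t := ht
    linarith

lemma tendsto_Wf : Tendsto Wf (nhdsWithin 0 (Set.Ioi 0)) (𝓝 (1/π)) := by
  have l1 : Tendsto (fun t : ℝ => t * D (1-t)) (nhdsWithin 0 (Set.Ioi 0)) (𝓝 (1/π)) := by
    have := tendsto_oneSub_mul_D.comp tendsto_map
    apply this.congr
    intro t
    simp only [Function.comp_apply]
    norm_num
  have l2 : Tendsto (fun t : ℝ => t * F (1-t)) (nhdsWithin 0 (Set.Ioi 0)) (𝓝 0) := by
    have := tendsto_oneSub_mul_F.comp tendsto_map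
    apply this.congr
    intro t
    simp only [Function.comp_apply]
    norm_num
  have l3 : Tendsto D (nhdsWithin 0 (Set.Ioi 0)) (𝓝 (D 0)) :=
    ((hasDerivAt_D (x := 0) (by norm_num)).continuousAt.tendsto).mono_left nhdsWithin_le_nhds
  have l4 : Tendsto F (nhdsWithin 0 (Set.Ioi 0)) (𝓝 1) := by
    have := ((hasDerivAt_F (x := 0) (by norm_num)).continuousAt.tendsto).mono_left
      (nhdsWithin_le_nhds (s := Set.Ioi (0:ℝ)))
    rwa [F_zero] at this
  have l5 : Tendsto (fun t : ℝ => 1 - t) (nhdsWithin 0 (Set.Ioi 0)) (𝓝 1) := by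
    have : Tendsto (fun t : ℝ => 1 - t) (𝓝 0) (𝓝 (1 - 0)) :=
      (continuous_const.sub continuous_id).tendsto 0
    rw [sub_zero] at this
    exact this.mono_left nhdsWithin_le_nhds
  have hcomb := l5.mul ((l3.mul l2).add (l1.mul l4))
  have hval : (1:ℝ) * (D 0 * 0 + (1/π) * 1) = 1/π := by ring
  rw [hval] at hcomb
  apply hcomb.congr
  intro t
  show (1-t) * (D t * (t * F (1-t)) + (t * D (1-t)) * F t) = Wf t
  unfold Wf
  ring

lemma Wf_eq_pi_inv {α : ℝ} (h0 : 0 < α) (h1 : α < 1) : Wf α = 1/π := by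
  have hev : ∀ᶠ t in nhdsWithin (0:ℝ) (Set.Ioi 0), Wf t = Wf α := by
    filter_upwards [Ioo_mem_nhdsGT_of_mem (Set.mem_Ico.2 ⟨le_refl (0:ℝ), h0⟩)] with t ht
    exact (Wf_eq_of_le ht.1 ht.2.le h1).symm
  have hconst : Tendsto Wf (nhdsWithin (0:ℝ) (Set.Ioi 0)) (𝓝 (Wf α)) :=
    Tendsto.congr' (Filter.EventuallyEq.symm (Filter.eventuallyEq_of_mem
      (Filter.eventually_iff.1 hev) (fun t ht => ht))) tendsto_const_nhds
  exact tendsto_nhds_unique hconst tendsto_Wf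

end PeriodRatioAux

/-- **Derivative of the period ratio.** With `u(α) = F(1-α)/(2F(α))`, for `0 < α < 1`,
`du/dα = -1/(2πα(1-α)F(α)²)`. -/
theorem deriv_period_ratio (α : ℝ) (hα0 : 0 < α) (hα1 : α < 1) :
    HasDerivAt (fun t : ℝ => F (1 - t) / (2 * F t))
      (-1 / (2 * π * α * (1 - α) * (F α) ^ 2)) α := by
  open PeriodRatioAux in
  have hxt : |α| < 1 := abs_lt.2 ⟨by linarith, hα1⟩
  have hxs : |1-α| < 1 := abs_lt.2 ⟨by linarith, by linarith⟩
  have hneg : HasDerivAt (fun s : ℝ => 1 - s) (-1) α := by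
    simpa using (hasDerivAt_id α).const_sub 1
  have hF1 := PeriodRatioAux.hasDerivAt_F hxt
  have hF2 : HasDerivAt (fun s : ℝ => F (1-s)) (-(PeriodRatioAux.D (1-α))) α := by
    have := (PeriodRatioAux.hasDerivAt_F hxs).comp α hneg
    simpa [Function.comp_def] using this
  have hFpos : 0 < F α := PeriodRatioAux.F_pos hα0.le hα1
  have hne : 2 * F α ≠ 0 := by positivity
  have h := hF2.div (hF1.const_mul 2) hne
  have hwr := PeriodRatioAux.Wf_eq_pi_inv hα0 hα1
  unfold PeriodRatioAux.Wf at hwr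
  refine h.congr_deriv ?_
  symm
  have hπ : (π:ℝ) ≠ 0 := Real.pi_ne_zero
  have hα0' : α ≠ 0 := hα0.ne'
  have h1α : (0:ℝ) < 1 - α := by linarith
  have hd1 : (0:ℝ) < 2*π*α*(1-α)*F α^2 :=
    mul_pos (mul_pos (mul_pos (mul_pos two_pos Real.pi_pos) hα0) h1α) (pow_pos hFpos 2)
  have hd2 : (0:ℝ) < (2*F α)^2 := by positivity
  rw [div_eq_div_iff hd1.ne' hd2.ne']
  have hwr' : π * (α * (1-α) * (PeriodRatioAux.D α * F (1-α) + PeriodRatioAux.D (1-α) * F α))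
      = 1 := by rw [hwr]; field_simp
  linear_combination (4*(F α)^2) * hwr'
end
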